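/- Let Q ∈ F_q[X0,X1,X2] be a homogeneous factor of C of degree at least 2 that is irreducible over the algebraic closure of F_q. Then Q does not divide Φ_q(Q) = X0^q·∂Q/∂X0 + X1^q·∂Q/∂X1 + X2^q·∂Q/∂X2; that is, every nonlinear absolutely irreducible component of the curve C = 0 defined over F_q is F_q-Frobenius classical. -/

import Mathlib

open MvPolynomial

/-- The polynomial `C = X0^d + X1^d + X2^d + (e0·X0 + e1·X1 + e2·X2)^d` over `F_q`. -/
noncomputable def fermatSlice (F : Type) [Field F] (d : ℕ) (e0 e1 e2 : F) :
    MvPolynomial (Fin 3) F :=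
  X 0 ^ d + X 1 ^ d + X 2 ^ d +
    (MvPolynomial.C e0 * X 0 + MvPolynomial.C e1 * X 1 + MvPolynomial.C e2 * X 2) ^ d

/-- `Φ_q(Q) = X0^q·∂Q/∂X0 + X1^q·∂Q/∂X1 + X2^q·∂Q/∂X2`. -/
noncomputable def Phi (F : Type) [Field F] (q : ℕ) (Q : MvPolynomial (Fin 3) F) :
    MvPolynomial (Fin 3) F :=
  X 0 ^ q * MvPolynomial.pderiv 0 Q + X 1 ^ q * MvPolynomial.pderiv 1 Q +
    X 2 ^ q * MvPolynomial.pderiv 2 Q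

lemma Phi_map {F K : Type} [Field F] [Field K] (φ : F →+* K) (q : ℕ)
    (Q : MvPolynomial (Fin 3) F) :
    MvPolynomial.map φ (Phi F q Q) = Phi K q (MvPolynomial.map φ Q) := by
  simp [Phi, MvPolynomial.pderiv_map, map_add, map_mul, map_pow, MvPolynomial.map_X]

lemma Phi_mul {F : Type} [Field F] (q : ℕ) (A B : MvPolynomial (Fin 3) F) :
    Phi F q (A * B) = A * Phi F q B + B * Phi F q A := by
  simp only [Phi, pderiv_mul]
  ring

lemma aeval_homog {K : Type} [CommRing K] (A : MvPolynomial (Fin 3) K) (n : ℕ)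
    (hA : A.IsHomogeneous n) (c : Fin 3 → K) :
    aeval (fun k => Polynomial.C (c k) * Polynomial.X) A
      = Polynomial.C (eval c A) * Polynomial.X ^ n := by
  conv_lhs => rw [← A.support_sum_monomial_coeff]
  conv_rhs => rw [← A.support_sum_monomial_coeff]
  rw [map_sum, map_sum, map_sum, Finset.sum_mul]
  refine Finset.sum_congr rfl fun u hu => ?_
  have hdeg : ∑ i, u i = n := by
    have := hA (mem_support_iff.mp hu)
    simpa [Finsupp.weight_apply, Finsupp.sum_fintype] using this
  rw [aeval_monomial, eval_monomial]
  have hprod : (u.prod fun i k => (Polynomial.C (c i) * Polynomial.X) ^ k)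
      = ∏ i, (Polynomial.C (c i) * Polynomial.X) ^ u i := by
    rw [Finsupp.prod_fintype]
    intro i; simp
  have hprod2 : (u.prod fun i k => (c i) ^ k) = ∏ i, (c i) ^ u i := by
    rw [Finsupp.prod_fintype]
    intro i; simp
  rw [hprod, hprod2]
  simp only [mul_pow, ← Polynomial.C_pow]
  rw [Finset.prod_mul_distrib, Finset.prod_pow_eq_pow_sum, hdeg,
    ← (map_prod (Polynomial.C : K →+* Polynomial K) (fun i => c i ^ u i) Finset.univ),
    ← mul_assoc]
  rw [show (algebraMap K (Polynomial K)) (coeff u A) = Polynomial.C (coeff u A) from rfl,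
    ← Polynomial.C_mul]

lemma deg_le_one_of_dvd_linear {K : Type} [Field K] (A : MvPolynomial (Fin 3) K) (n : ℕ)
    (hA : A.IsHomogeneous n) (i j : Fin 3) (hij : j ≠ i) (r : K)
    (hdvd : A ∣ (X i - C r * X j)) : n ≤ 1 := by
  obtain ⟨B, hB⟩ := hdvd
  set c : Fin 3 → K := Pi.single i 1 with hc
  have hl : (X i - C r * X j : MvPolynomial (Fin 3) K).IsHomogeneous 1 :=
    (isHomogeneous_X _ _).sub ((isHomogeneous_X _ _).C_mul r)
  have hevl : eval c (X i - C r * X j : MvPolynomial (Fin 3) K) = 1 := by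
    simp [hc, Pi.single_eq_of_ne hij]
  have h1 := aeval_homog _ _ hl c
  rw [hevl, hB, map_mul, aeval_homog A n hA c] at h1
  have hne : (Polynomial.C (1:K) * Polynomial.X ^ 1 : Polynomial K) ≠ 0 := by
    simp [Polynomial.X_ne_zero]
  have hA0 : eval c A ≠ 0 := by
    intro h0
    rw [h0] at h1
    simp at h1
    exact hne (by simp [h1])
  have hB0 : (aeval (fun k => Polynomial.C (c k) * Polynomial.X) B : Polynomial K) ≠ 0 := by
    intro h0
    rw [h0, mul_zero] at h1
    exact hne h1.symm
  have hdegeq := congrArg Polynomial.natDegree h1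
  rw [Polynomial.natDegree_mul (by simp [hA0, pow_ne_zero, Polynomial.X_ne_zero]) hB0,
    Polynomial.natDegree_C_mul_X_pow n _ hA0] at hdegeq
  simp at hdegeq
  omega

lemma pow_add_pow_factor {K : Type} [Field K] [IsAlgClosed K] (d : ℕ) (hd : d ≠ 0)
    (i j : Fin 3) :
    ∃ s : Multiset K, (X i ^ d + X j ^ d : MvPolynomial (Fin 3) K)
      = (s.map (fun r => (X i - C r * X j : MvPolynomial (Fin 3) K))).prod := by
  classical
  set P : Polynomial K := Polynomial.X ^ d + Polynomial.C 1 with hP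
  have hmonic : P.Monic := Polynomial.monic_X_pow_add_C (1:K) hd
  have hsplits : P.Splits := IsAlgClosed.splits P
  have hprod : P = (P.roots.map fun a => Polynomial.X - Polynomial.C a).prod :=
    hsplits.eq_prod_roots_of_monic hmonic
  have hcard : P.roots.card = d := by
    rw [(Polynomial.splits_iff_card_roots).mp hsplits, hP,
      Polynomial.natDegree_X_pow_add_C]
  refine ⟨P.roots, ?_⟩
  set R := MvPolynomial (Fin 3) K
  set L := FractionRing R
  set ι : R →+* L := algebraMap R L with hι
  have hinj : Function.Injective ι := IsFractionRing.injective R L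
  apply hinj
  rw [map_multiset_prod, Multiset.map_map]
  set x : L := ι (X i) with hx
  set y : L := ι (X j) with hy
  have hy0 : y ≠ 0 := by
    simp only [hy, ne_eq, map_eq_zero_iff ι hinj]
    exact MvPolynomial.X_ne_zero j
  set κ : K →+* L := ι.comp (MvPolynomial.C) with hκ
  set z : L := x * y⁻¹ with hz
  have hev := congrArg (Polynomial.eval₂ κ z) hprod
  rw [Polynomial.eval₂_add, Polynomial.eval₂_pow, Polynomial.eval₂_X, Polynomial.eval₂_C] at hev
  have hev2 : (Polynomial.eval₂ κ z ((P.roots.map fun a => Polynomial.X - Polynomial.C a).prod))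
      = (P.roots.map fun a => z - κ a).prod := by
    have := map_multiset_prod (Polynomial.eval₂RingHom κ z)
      (P.roots.map fun a => Polynomial.X - Polynomial.C a)
    rw [Multiset.map_map] at this
    rw [Polynomial.coe_eval₂RingHom] at this
    rw [this]
    congr 1
    apply Multiset.map_congr rfl
    intro a _
    simp [Polynomial.eval₂_sub]
  rw [hev2, map_one] at hev
  have hyz : y * z = x := by
    rw [hz, mul_comm x, ← mul_assoc, mul_inv_cancel₀ hy0, one_mul]
  have hfac : ∀ r : K, ι (X i - C r * X j) = y * (z - κ r) := by
    intro r
    rw [mul_sub, hyz, map_sub, map_mul]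
    have : ι (MvPolynomial.C r) = κ r := rfl
    rw [this, ← hx, ← hy]
    ring
  rw [map_add, map_pow, map_pow, ← hx, ← hy]
  calc x ^ d + y ^ d = y ^ d * (z ^ d + 1) := by
        rw [mul_add, mul_one, ← mul_pow, hyz]
    _ = (P.roots.map fun _ => y).prod * (P.roots.map fun a => z - κ a).prod := by
        rw [← hev, Multiset.map_const', Multiset.prod_replicate, hcard]
    _ = (P.roots.map fun r => y * (z - κ r)).prod := by
        rw [← Multiset.prod_map_mul]
    _ = (P.roots.map fun r => ι (X i - C r * X j)).prod := by
        congr 1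
        apply Multiset.map_congr rfl
        intro r _
        exact (hfac r).symm

lemma Phi_fermatSlice {K : Type} [Field K] (p n d : ℕ) [hp : Fact p.Prime] [CharP K p]
    (hq : p ^ n = 2 * d + 1) (hd1 : 1 ≤ d) (ε0 ε1 ε2 : K)
    (h0 : ε0 ^ (p ^ n) = ε0) (h1 : ε1 ^ (p ^ n) = ε1) (h2 : ε2 ^ (p ^ n) = ε2) :
    Phi K (p ^ n) (fermatSlice K d ε0 ε1 ε2)
      = (d : MvPolynomial (Fin 3) K) *
        ((X 0 ^ d) ^ 3 + (X 1 ^ d) ^ 3 + (X 2 ^ d) ^ 3 +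
          ((C ε0 * X 0 + C ε1 * X 1 + C ε2 * X 2) ^ d) ^ 3) := by
  set q := p ^ n with hqdef
  set L : MvPolynomial (Fin 3) K := C ε0 * X 0 + C ε1 * X 1 + C ε2 * X 2 with hL
  have hLq : L ^ q = C ε0 * X 0 ^ q + C ε1 * X 1 ^ q + C ε2 * X 2 ^ q := by
    rw [hL, add_pow_char_pow, add_pow_char_pow, mul_pow, mul_pow, mul_pow,
      ← C_pow, ← C_pow, ← C_pow, h0, h1, h2]
  have hpd : ∀ k : Fin 3, pderiv k L = C (![ε0, ε1, ε2] k) := by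
    intro k
    fin_cases k <;>
      simp [hL, pderiv_C_mul, pderiv_X_self, pderiv_X_of_ne]
  have hD : ∀ k : Fin 3, pderiv k (fermatSlice K d ε0 ε1 ε2)
      = (d : MvPolynomial (Fin 3) K) * X k ^ (d - 1) +
        (d : MvPolynomial (Fin 3) K) * L ^ (d - 1) * C (![ε0, ε1, ε2] k) := by
    intro k
    rw [fermatSlice, map_add, map_add, map_add, pderiv_pow, pderiv_pow, pderiv_pow,
      pderiv_pow, ← hL, hpd k]
    fin_cases k <;>
      simp [pderiv_X_self, pderiv_X_of_ne]
  have e1 : ∀ k : Fin 3, (X k : MvPolynomial (Fin 3) K) ^ q * X k ^ (d - 1)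
      = (X k ^ d) ^ 3 := by
    intro k
    rw [← pow_add, ← pow_mul]
    congr 1
    omega
  have e3 : (L ^ d) ^ 3 = L ^ (d - 1) * L ^ q := by
    rw [← pow_add, ← pow_mul]
    congr 1
    omega
  rw [Phi, hD 0, hD 1, hD 2]
  rw [show ((![ε0, ε1, ε2] (0 : Fin 3))) = ε0 from rfl]
  rw [show ((![ε0, ε1, ε2] (1 : Fin 3))) = ε1 from rfl]
  rw [show ((![ε0, ε1, ε2] (2 : Fin 3))) = ε2 from rfl]
  have expand : ∀ A B E : MvPolynomial (Fin 3) K, ∀ c : K,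
      A * ((d : MvPolynomial (Fin 3) K) * B + (d : MvPolynomial (Fin 3) K) * E * C c)
      = (d : MvPolynomial (Fin 3) K) * (A * B) + (d : MvPolynomial (Fin 3) K) * (A * E * C c) := by
    intros; ring
  rw [expand, expand, expand, e1 0, e1 1, e1 2]
  rw [show (X 0 : MvPolynomial (Fin 3) K) ^ q * L ^ (d-1) * C ε0
      = L ^ (d-1) * (C ε0 * X 0 ^ q) from by ring]
  rw [show (X 1 : MvPolynomial (Fin 3) K) ^ q * L ^ (d-1) * C ε1
      = L ^ (d-1) * (C ε1 * X 1 ^ q) from by ring]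
  rw [show (X 2 : MvPolynomial (Fin 3) K) ^ q * L ^ (d-1) * C ε2
      = L ^ (d-1) * (C ε2 * X 2 ^ q) from by ring]
  rw [e3, hLq]
  ring

theorem statement9 (p h : ℕ) (hp : Nat.Prime p) (hp3 : 3 < p) (hh : 0 < h)
    (F : Type) [Field F] [Fintype F] (hcard : Fintype.card F = p ^ h)
    (d : ℕ) (hd : p ^ h = 2 * d + 1) (e0 e1 e2 : F)
    (Q : MvPolynomial (Fin 3) F) (m : ℕ) (hQhom : Q.IsHomogeneous m)
    (hQdeg : 2 ≤ Q.totalDegree)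
    (hQabs : Irreducible (MvPolynomial.map (algebraMap F (AlgebraicClosure F)) Q))
    (hQdvd : Q ∣ fermatSlice F d e0 e1 e2) :
    ¬ Q ∣ Phi F (p ^ h) Q := by
  intro hdvd
  haveI : Fact p.Prime := ⟨hp⟩
  -- characteristic of F is p
  haveI hrchar : CharP F (ringChar F) := ringChar.charP F
  obtain ⟨n, hrprime, hcardr⟩ := FiniteField.card F (ringChar F)
  have hpr : p = ringChar F := by
    have hdvd1 : p ∣ ringChar F ^ (n : ℕ) := by
      rw [← hcardr, hcard]
      exact dvd_pow_self p hh.ne'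
    exact (Nat.prime_dvd_prime_iff_eq hp hrprime).mp (hp.dvd_of_dvd_pow hdvd1)
  haveI hFp : CharP F p := by rw [hpr]; exact hrchar
  set K := AlgebraicClosure F with hK
  set φ := algebraMap F K with hφ
  haveI hKp : CharP K p := charP_of_injective_algebraMap φ.injective p
  haveI : IsAlgClosed K := inferInstanceAs (IsAlgClosed (AlgebraicClosure F))
  set Q' := MvPolynomial.map φ Q with hQ'
  have hQ'prime : Prime Q' := UniqueFactorizationMonoid.irreducible_iff_prime.mp hQabs
  -- basic numerics
  have hd2 : 2 ≤ d := by
    have h4 : 4 ≤ p ^ h := le_trans (by omega) (Nat.le_self_pow hh.ne' p)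
    omega
  have hdK : ((d : K)) ≠ 0 := by
    have hcast : ((2 * d + 1 : ℕ) : K) = 0 := by
      rw [← hd]
      push_cast
      rw [CharP.cast_eq_zero K p]
      exact zero_pow hh.ne'
    push_cast at hcast
    intro h0
    rw [Nat.cast_mul, h0] at hcast
    simp at hcast
  have h3K : ((3 : K)) ≠ 0 := by
    have := CharP.cast_eq_zero_iff K p 3
    intro h0
    have h30 : ((3:ℕ) : K) = 0 := by push_cast; exact h0
    have := this.mp h30
    have := Nat.le_of_dvd (by norm_num) this
    omega
  -- transfer divisibilities to K
  have hC' : MvPolynomial.map φ (fermatSlice F d e0 e1 e2)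
      = fermatSlice K d (φ e0) (φ e1) (φ e2) := by
    simp [fermatSlice, map_add, map_pow, map_mul]
  have hQdvd' : Q' ∣ fermatSlice K d (φ e0) (φ e1) (φ e2) := by
    rw [← hC']
    exact map_dvd (MvPolynomial.map φ) hQdvd
  have hPhiQ' : Q' ∣ Phi K (p ^ h) Q' := by
    have := map_dvd (MvPolynomial.map φ) hdvd
    rwa [Phi_map] at this
  obtain ⟨Rp, hRp⟩ := hQdvd'
  have hPhiC : Q' ∣ Phi K (p ^ h) (fermatSlice K d (φ e0) (φ e1) (φ e2)) := by
    rw [hRp, Phi_mul]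
    exact dvd_add (dvd_mul_right Q' _) (Dvd.dvd.mul_left hPhiQ' Rp)
  -- Frobenius fixes the coefficients
  have hεpow : ∀ e : F, (φ e) ^ (p ^ h) = φ e := by
    intro e
    rw [← map_pow, ← hcard, FiniteField.pow_card]
  -- compute Phi of fermatSlice
  rw [Phi_fermatSlice p h d hd (by omega) (φ e0) (φ e1) (φ e2)
    (hεpow e0) (hεpow e1) (hεpow e2)] at hPhiC
  set a : MvPolynomial (Fin 3) K := X 0 ^ d with ha
  set b : MvPolynomial (Fin 3) K := X 1 ^ d with hb
  set c : MvPolynomial (Fin 3) K := X 2 ^ d with hc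
  set e : MvPolynomial (Fin 3) K := (C (φ e0) * X 0 + C (φ e1) * X 1 + C (φ e2) * X 2) ^ d
    with he
  have hCeq : fermatSlice K d (φ e0) (φ e1) (φ e2) = a + b + c + e := rfl
  have hident : a ^ 3 + b ^ 3 + c ^ 3 + e ^ 3
      = (a + b + c + e) * (e ^ 2 - e * (a + b + c) + (a + b + c) ^ 2)
        - 3 * ((a + b) * ((b + c) * (a + c))) := by ring
  have hQdvdG : Q' ∣ (d : MvPolynomial (Fin 3) K) * (3 * ((a + b) * ((b + c) * (a + c)))) := by
    have h1 : Q' ∣ (d : MvPolynomial (Fin 3) K)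
        * ((a + b + c + e) * (e ^ 2 - e * (a + b + c) + (a + b + c) ^ 2)) := by
      rw [← hCeq, hRp]
      exact Dvd.dvd.mul_left (dvd_mul_of_dvd_left (dvd_mul_right Q' Rp) _) _
    have h2 := dvd_sub h1 hPhiC
    rw [hident] at h2
    have : (d : MvPolynomial (Fin 3) K)
        * ((a + b + c + e) * (e ^ 2 - e * (a + b + c) + (a + b + c) ^ 2))
        - (d : MvPolynomial (Fin 3) K)
        * ((a + b + c + e) * (e ^ 2 - e * (a + b + c) + (a + b + c) ^ 2)
            - 3 * ((a + b) * ((b + c) * (a + c))))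
        = (d : MvPolynomial (Fin 3) K) * (3 * ((a + b) * ((b + c) * (a + c)))) := by ring
    rwa [this] at h2
  -- remove the constant
  have hQdvdG' : Q' ∣ (a + b) * ((b + c) * (a + c)) := by
    have hu : ((d : K) * 3) ≠ 0 := mul_ne_zero hdK h3K
    have hCd : (C ((d : K) * 3) : MvPolynomial (Fin 3) K)
        = (d : MvPolynomial (Fin 3) K) * 3 := by
      rw [C_mul, map_natCast C d, map_ofNat C 3]
    have hrw : (d : MvPolynomial (Fin 3) K) * (3 * ((a + b) * ((b + c) * (a + c))))
        = C ((d : K) * 3) * ((a + b) * ((b + c) * (a + c))) := by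
      rw [hCd]
      ring
    rw [hrw] at hQdvdG
    have := Dvd.dvd.mul_left hQdvdG (C ((d : K) * 3)⁻¹)
    rwa [← mul_assoc, ← C_mul, inv_mul_cancel₀ hu, C_1, one_mul] at this
  -- Q' is homogeneous of degree m, and m ≥ 2
  have hQne : Q ≠ 0 := by
    intro h0
    rw [h0] at hQdeg
    simp at hQdeg
  have hm : m = Q.totalDegree := (hQhom.totalDegree hQne).symm
  have hQ'hom : Q'.IsHomogeneous m := hQhom.map φ
  have hnodvd : ∀ i j : Fin 3, j ≠ i →
      ¬ Q' ∣ (X i ^ d + X j ^ d : MvPolynomial (Fin 3) K) := by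
    intro i j hij hdvdij
    obtain ⟨s, hs⟩ := pow_add_pow_factor (K := K) d (by omega) i j
    rw [hs] at hdvdij
    obtain ⟨ℓ, hℓmem, hℓdvd⟩ := hQ'prime.exists_mem_multiset_dvd hdvdij
    obtain ⟨r, _, rfl⟩ := Multiset.mem_map.mp hℓmem
    have := deg_le_one_of_dvd_linear Q' m hQ'hom i j hij r hℓdvd
    omega
  rcases hQ'prime.2.2 _ _ hQdvdG' with h | h
  · exact hnodvd 0 1 (by decide) (by rwa [ha, hb] at h)
  rcases hQ'prime.2.2 _ _ h with h' | h'
  · exact hnodvd 1 2 (by decide) (by rwa [hb, hc] at h')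
  · exact hnodvd 0 2 (by decide) (by rwa [ha, hc] at h')
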